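/- Let 𝒢₁ ⊆ 𝒢₂ and 𝒢 be sub-σ-algebras of ℱ on a probability space (Ω,ℱ,ℙ) such that E[1_G | 𝒢₁] = E[1_G | 𝒢₂] a.s. for all G ∈ 𝒢. Then for every integrable random variable X, E[ E[X | 𝒢₁ ∨ 𝒢] | 𝒢₂ ] = E[X | 𝒢₁] almost surely. -/

import Mathlib

open MeasureTheory

section Aux

variable {Ω : Type*} {m0 : MeasurableSpace Ω} {μ : Measure Ω} [IsProbabilityMeasure μ]

private lemma indicator_mul_eq (F : Ω → ℝ) (s : Set Ω) :
    s.indicator F = fun x => s.indicator (fun _ => (1 : ℝ)) x * F x :=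
  funext fun x => by by_cases hx : x ∈ s <;> simp [hx]

private lemma indicator_norm_le_one (s : Set Ω) (x : Ω) :
    ‖s.indicator (fun _ => (1 : ℝ)) x‖ ≤ 1 := by
  by_cases hx : x ∈ s <;> simp [hx]

/-- Duality: integrating a bounded `m`-measurable function against `h` or against `μ[h|m]`
gives the same result. -/
private lemma int_mul_condexp {m : MeasurableSpace Ω} (hm : m ≤ m0)
    {f h : Ω → ℝ} (hf : AEStronglyMeasurable[m] f μ) {c : ℝ}
    (hbound : ∀ᵐ x ∂μ, ‖f x‖ ≤ c) (hh : Integrable h μ) :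
    ∫ x, f x * h x ∂μ = ∫ x, f x * (μ[h|m]) x ∂μ := by
  have hfm0 : AEStronglyMeasurable[m0] f μ :=
    ⟨hf.mk f, hf.stronglyMeasurable_mk.mono hm, hf.ae_eq_mk⟩
  calc ∫ x, f x * h x ∂μ = ∫ x, (f * h) x ∂μ := rfl
    _ = ∫ x, (μ[f * h|m]) x ∂μ := (integral_condExp hm).symm
    _ = ∫ x, (f * μ[h|m]) x ∂μ :=
        integral_congr_ae (condExp_stronglyMeasurable_mul_of_bound₀ hm hf hh c hbound)
    _ = ∫ x, f x * (μ[h|m]) x ∂μ := rfl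

/-- Key lemma: the condexp of an indicator of a `G2`-set on `G1 ⊔ G` coincides with that on
`G1`. -/
private lemma condexp_indicator_sup
    {G1 G2 G : MeasurableSpace Ω}
    (hG1 : G1 ≤ m0) (hG2 : G2 ≤ m0) (hG : G ≤ m0) (h12 : G1 ≤ G2)
    (hind : ∀ A : Set Ω, MeasurableSet[G] A →
      μ[(A.indicator (fun _ => (1 : ℝ))) | G1] =ᵐ[μ] μ[(A.indicator (fun _ => (1 : ℝ))) | G2])
    {s : Set Ω} (hs : MeasurableSet[G2] s) :
    μ[(s.indicator (fun _ => (1 : ℝ))) | G1]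
      =ᵐ[μ] μ[(s.indicator (fun _ => (1 : ℝ))) | G1 ⊔ G] := by
  letI : MeasurableSpace Ω := m0
  set χs : Ω → ℝ := s.indicator (fun _ => (1 : ℝ)) with hχs_def
  have hm : G1 ⊔ G ≤ m0 := sup_le hG1 hG
  have hχs : Integrable χs μ := (integrable_const (1 : ℝ)).indicator (hG2 s hs)
  set g : Ω → ℝ := μ[χs | G1] with hg_def
  have hg_bdd : ∀ᵐ x ∂μ, |g x| ≤ ((1 : NNReal) : ℝ) :=
    ae_bdd_condExp_of_ae_bdd (Filter.Eventually.of_forall fun x => by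
      simpa using indicator_norm_le_one s x)
  -- the main integral identity, proved by a π-λ argument
  have key : ∀ t, MeasurableSet[G1 ⊔ G] t →
      ∫ x in t, g x ∂μ = ∫ x in t, χs x ∂μ := by
    set S : Set (Set Ω) :=
      {t | ∃ A, MeasurableSet[G1] A ∧ ∃ B, MeasurableSet[G] B ∧ t = A ∩ B} with hS_def
    have h_eq : G1 ⊔ G = MeasurableSpace.generateFrom S := by
      refine le_antisymm (sup_le ?_ ?_) (MeasurableSpace.generateFrom_le ?_)
      · intro A hA
        exact MeasurableSpace.measurableSet_generateFrom
          ⟨A, hA, Set.univ, MeasurableSet.univ, (Set.inter_univ A).symm⟩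
      · intro B hB
        exact MeasurableSpace.measurableSet_generateFrom
          ⟨Set.univ, MeasurableSet.univ, B, hB, (Set.univ_inter B).symm⟩
      · rintro t ⟨A, hA, B, hB, rfl⟩
        exact ((le_sup_left : G1 ≤ G1 ⊔ G) A hA).inter ((le_sup_right : G ≤ G1 ⊔ G) B hB)
    have h_inter : IsPiSystem S := by
      rintro t1 ⟨A1, hA1, B1, hB1, rfl⟩ t2 ⟨A2, hA2, B2, hB2, rfl⟩ -
      exact ⟨A1 ∩ A2, hA1.inter hA2, B1 ∩ B2, hB1.inter hB2, by
        ext x; simp [Set.mem_inter_iff]; tauto⟩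
    intro t ht
    refine MeasurableSpace.induction_on_inter (m := G1 ⊔ G) (C := fun t _ =>
      ∫ x in t, g x ∂μ = ∫ x in t, χs x ∂μ) h_eq h_inter (by simp) ?_ ?_ ?_ t ht
    · -- basic sets A ∩ B
      rintro u ⟨A, hA, B, hB, rfl⟩
      set χA : Ω → ℝ := A.indicator (fun _ => (1 : ℝ)) with hχA_def
      set χB : Ω → ℝ := B.indicator (fun _ => (1 : ℝ)) with hχB_def
      have hχB_int : Integrable χB μ := (integrable_const (1 : ℝ)).indicator (hG B hB)
      set k : Ω → ℝ := μ[χB | G1] with hk_def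
      have hk_bdd : ∀ᵐ x ∂μ, |k x| ≤ ((1 : NNReal) : ℝ) :=
        ae_bdd_condExp_of_ae_bdd (Filter.Eventually.of_forall fun x => by
          simpa using indicator_norm_le_one B x)
      have hAB0 : MeasurableSet (A ∩ B) := (hG1 A hA).inter (hG B hB)
      have hrw : ∀ F : Ω → ℝ, ∫ x in A ∩ B, F x ∂μ = ∫ x, (χA x * F x) * χB x ∂μ := by
        intro F
        rw [← integral_indicator hAB0]
        congr 1
        funext x
        by_cases hxA : x ∈ A <;> by_cases hxB : x ∈ B <;>
          simp [Set.indicator_apply, hχA_def, hχB_def, Set.mem_inter_iff, hxA, hxB]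
      -- strong measurability facts
      have hχA_G1 : StronglyMeasurable[G1] χA := stronglyMeasurable_const.indicator hA
      have hχs_G2 : StronglyMeasurable[G2] χs := stronglyMeasurable_const.indicator hs
      have hg_G1 : StronglyMeasurable[G1] g := stronglyMeasurable_condExp
      have hk_G1 : StronglyMeasurable[G1] k := stronglyMeasurable_condExp
      -- RHS chain
      have hf1 : AEStronglyMeasurable[G2] (fun x => χA x * χs x) μ :=
        (((hχA_G1.mono h12).mul hχs_G2)).aestronglyMeasurable
      have hbound1 : ∀ᵐ x ∂μ, ‖χA x * χs x‖ ≤ 1 :=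
        Filter.Eventually.of_forall fun x => by
          have h1 := indicator_norm_le_one A x
          have h2 := indicator_norm_le_one s x
          rw [norm_mul]
          nlinarith [norm_nonneg (χA x), norm_nonneg (χs x)]
      have hf2 : AEStronglyMeasurable[G1] (fun x => χA x * k x) μ :=
        (hχA_G1.mul hk_G1).aestronglyMeasurable
      have hbound2 : ∀ᵐ x ∂μ, ‖χA x * k x‖ ≤ 1 := by
        filter_upwards [hk_bdd] with x hx
        have h1 := indicator_norm_le_one A x
        have h2 : ‖k x‖ ≤ 1 := by simpa using hx
        rw [norm_mul]
        nlinarith [norm_nonneg (χA x), norm_nonneg (k x)]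
      have hf3 : AEStronglyMeasurable[G2] (fun x => χA x * g x) μ :=
        ((hχA_G1.mul hg_G1).mono h12).aestronglyMeasurable
      have hbound3 : ∀ᵐ x ∂μ, ‖χA x * g x‖ ≤ 1 := by
        filter_upwards [hg_bdd] with x hx
        have h1 := indicator_norm_le_one A x
        have h2 : ‖g x‖ ≤ 1 := by simpa using hx
        rw [norm_mul]
        nlinarith [norm_nonneg (χA x), norm_nonneg (g x)]
      have hRHS : ∫ x in A ∩ B, χs x ∂μ = ∫ x, (χA x * k x) * g x ∂μ := by
        calc ∫ x in A ∩ B, χs x ∂μ = ∫ x, (χA x * χs x) * χB x ∂μ := hrw χs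
          _ = ∫ x, (χA x * χs x) * (μ[χB | G2]) x ∂μ :=
              int_mul_condexp hG2 hf1 hbound1 hχB_int
          _ = ∫ x, (χA x * χs x) * k x ∂μ := by
              refine integral_congr_ae ?_
              filter_upwards [hind B hB] with x hx
              rw [hk_def, hx]
          _ = ∫ x, (χA x * k x) * χs x ∂μ :=
              integral_congr_ae (Filter.Eventually.of_forall fun x => by ring)
          _ = ∫ x, (χA x * k x) * g x ∂μ :=
              int_mul_condexp hG1 hf2 hbound2 hχs
      have hLHS : ∫ x in A ∩ B, g x ∂μ = ∫ x, (χA x * g x) * k x ∂μ := by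
        calc ∫ x in A ∩ B, g x ∂μ = ∫ x, (χA x * g x) * χB x ∂μ := hrw g
          _ = ∫ x, (χA x * g x) * (μ[χB | G2]) x ∂μ :=
              int_mul_condexp hG2 hf3 hbound3 hχB_int
          _ = ∫ x, (χA x * g x) * k x ∂μ := by
              refine integral_congr_ae ?_
              filter_upwards [hind B hB] with x hx
              rw [hk_def, hx]
      rw [hLHS, hRHS]
      exact integral_congr_ae (Filter.Eventually.of_forall fun x => by ring)
    · -- complements
      intro u hu hu_eq
      have hu0 : MeasurableSet u := hm u hu
      have e1 := integral_add_compl hu0 (integrable_condExp : Integrable g μ)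
      have e2 := integral_add_compl hu0 hχs
      have e3 : ∫ x, g x ∂μ = ∫ x, χs x ∂μ := integral_condExp hG1
      linarith
    · -- countable disjoint unions
      intro f hf_disj hf_meas hf_eq
      have hf0 : ∀ i, MeasurableSet (f i) := fun i => hm _ (hf_meas i)
      rw [integral_iUnion hf0 hf_disj (integrable_condExp : Integrable g μ).integrableOn,
        integral_iUnion hf0 hf_disj hχs.integrableOn]
      exact tsum_congr hf_eq
  exact ae_eq_condExp_of_forall_setIntegral_eq hm hχs
    (fun t _ _ => integrable_condExp.integrableOn)
    (fun t ht _ => key t ht)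
    ((stronglyMeasurable_condExp.mono (le_sup_left : G1 ≤ G1 ⊔ G)).aestronglyMeasurable)

end Aux

/-- If `𝒢₁ ⊆ 𝒢₂` and `𝒢` are sub-σ-algebras such that `E[1_G | 𝒢₁] = E[1_G | 𝒢₂]` a.s.
for every `G ∈ 𝒢`, then for every integrable `X`,
`E[ E[X | 𝒢₁ ⊔ 𝒢] | 𝒢₂ ] = E[X | 𝒢₁]` almost surely. -/
theorem condexp_condexp_sup_of_indicator_eq
    {Ω : Type*} {m0 : MeasurableSpace Ω} {μ : Measure Ω} [IsProbabilityMeasure μ]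
    {G1 G2 G : MeasurableSpace Ω}
    (hG1 : G1 ≤ m0) (hG2 : G2 ≤ m0) (hG : G ≤ m0) (h12 : G1 ≤ G2)
    (hind : ∀ A : Set Ω, MeasurableSet[G] A →
      μ[(A.indicator (fun _ => (1 : ℝ))) | G1] =ᵐ[μ] μ[(A.indicator (fun _ => (1 : ℝ))) | G2])
    (X : Ω → ℝ) (hX : Integrable X μ) :
    μ[ (μ[X | G1 ⊔ G]) | G2] =ᵐ[μ] μ[X | G1] := by
  letI : MeasurableSpace Ω := m0
  have hm : G1 ⊔ G ≤ m0 := sup_le hG1 hG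
  set Z : Ω → ℝ := μ[X | G1 ⊔ G] with hZ_def
  set Y : Ω → ℝ := μ[X | G1] with hY_def
  have hZ_int : Integrable Z μ := integrable_condExp
  have hY_int : Integrable Y μ := integrable_condExp
  refine (ae_eq_condExp_of_forall_setIntegral_eq hG2 hZ_int
    (fun t _ _ => hY_int.integrableOn) ?_
    ((stronglyMeasurable_condExp.mono h12).aestronglyMeasurable)).symm
  intro s hs _
  set χs : Ω → ℝ := s.indicator (fun _ => (1 : ℝ)) with hχs_def
  have hχs_int : Integrable χs μ := (integrable_const (1 : ℝ)).indicator (hG2 s hs)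
  set h : Ω → ℝ := μ[χs | G1] with hh_def
  have hkey : h =ᵐ[μ] μ[χs | G1 ⊔ G] :=
    condexp_indicator_sup hG1 hG2 hG h12 hind hs
  have hh_bdd : ∀ᵐ x ∂μ, |h x| ≤ ((1 : NNReal) : ℝ) :=
    ae_bdd_condExp_of_ae_bdd (Filter.Eventually.of_forall fun x => by
      simpa using indicator_norm_le_one s x)
  have hh_bdd' : ∀ᵐ x ∂μ, ‖h x‖ ≤ 1 := by
    filter_upwards [hh_bdd] with x hx; simpa using hx
  have hh_G1 : AEStronglyMeasurable[G1] h μ :=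
    (stronglyMeasurable_condExp).aestronglyMeasurable
  have hh_sup : AEStronglyMeasurable[G1 ⊔ G] h μ :=
    (stronglyMeasurable_condExp.mono (le_sup_left : G1 ≤ G1 ⊔ G)).aestronglyMeasurable
  have hrw : ∀ F : Ω → ℝ, ∫ x in s, F x ∂μ = ∫ x, χs x * F x ∂μ := by
    intro F
    rw [← integral_indicator (hG2 s hs)]
    congr 1
    funext x
    by_cases hx : x ∈ s <;> simp [Set.indicator_apply, hχs_def, hx]
  -- ∫_s Y = ∫ h * X
  have hY_eq : ∫ x in s, Y x ∂μ = ∫ x, h x * X x ∂μ := by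
    have hYχ : Integrable (fun x => Y x * χs x) μ := by
      have := hY_int.bdd_mul (c := 1)
        ((stronglyMeasurable_const.indicator (hG2 s hs)).aestronglyMeasurable)
        (Filter.Eventually.of_forall fun x => indicator_norm_le_one s x)
      exact this.congr (Filter.Eventually.of_forall fun x => by
        simp [hχs_def, mul_comm])
    calc ∫ x in s, Y x ∂μ = ∫ x, χs x * Y x ∂μ := hrw Y
      _ = ∫ x, Y x * χs x ∂μ :=
          integral_congr_ae (Filter.Eventually.of_forall fun x => by ring)
      _ = ∫ x, (μ[(Y * χs) | G1]) x ∂μ := (integral_condExp hG1).symm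
      _ = ∫ x, (Y * μ[χs | G1]) x ∂μ :=
          integral_congr_ae
            (condExp_mul_of_stronglyMeasurable_left stronglyMeasurable_condExp hYχ hχs_int)
      _ = ∫ x, h x * Y x ∂μ :=
          integral_congr_ae (Filter.Eventually.of_forall fun x => by
            simp [Pi.mul_apply, hh_def, hY_def, mul_comm])
      _ = ∫ x, h x * X x ∂μ := (int_mul_condexp hG1 hh_G1 hh_bdd' hX).symm
  -- ∫_s Z = ∫ h * X
  have hZ_eq : ∫ x in s, Z x ∂μ = ∫ x, h x * X x ∂μ := by
    have hm2 : Integrable (fun x => Z x * χs x) μ := by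
      have := hZ_int.bdd_mul (c := 1)
        ((stronglyMeasurable_const.indicator (hG2 s hs)).aestronglyMeasurable)
        (Filter.Eventually.of_forall fun x => indicator_norm_le_one s x)
      exact this.congr (Filter.Eventually.of_forall fun x => by
        simp [hχs_def, mul_comm])
    calc ∫ x in s, Z x ∂μ = ∫ x, χs x * Z x ∂μ := hrw Z
      _ = ∫ x, Z x * χs x ∂μ :=
          integral_congr_ae (Filter.Eventually.of_forall fun x => by ring)
      _ = ∫ x, (μ[(Z * χs) | G1 ⊔ G]) x ∂μ := (integral_condExp hm).symm
      _ = ∫ x, (Z * μ[χs | G1 ⊔ G]) x ∂μ :=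
          integral_congr_ae
            (condExp_mul_of_stronglyMeasurable_left stronglyMeasurable_condExp hm2 hχs_int)
      _ = ∫ x, h x * Z x ∂μ := by
          refine integral_congr_ae ?_
          filter_upwards [hkey] with x hx
          simp [Pi.mul_apply, ← hx, mul_comm]
      _ = ∫ x, h x * X x ∂μ := (int_mul_condexp hm hh_sup hh_bdd' hX).symm
  rw [hY_eq, hZ_eq]
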